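/- Let Q₀ : ℝ^d → ℝ be a probability density (measurable, nonnegative, with ∫_{ℝ^d} Q₀ = 1), and let α ∈ ℝ, β > 0. Define Q(z) = ∫_{ℝ^d} φ_{α,β}(z, x) Q₀(x) dx. Then Q(z) > 0 for every z ∈ ℝ^d, and the score ∇ log Q satisfies the weighted-integral identity ∇ log Q(z) = ∫_{ℝ^d} −((z − αx)/β²) · w(z, x) · Q₀(x) dx, where the weight is w(z, x) = φ_{α,β}(z, x) / ∫_{ℝ^d} φ_{α,β}(z, x′) Q₀(x′) dx′. -/

import Mathlib

open Real MeasureTheory InnerProductSpace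

/-- The Gaussian kernel `φ_{α,β}(z,x) = (2πβ²)^{-d/2} exp(-‖z-αx‖²/(2β²))`. -/
noncomputable def gaussKernel (d : ℕ) (α β : ℝ)
    (z x : EuclideanSpace ℝ (Fin d)) : ℝ :=
  (2 * Real.pi * β ^ 2) ^ (-(d : ℝ) / 2) * Real.exp (-‖z - α • x‖ ^ 2 / (2 * β ^ 2))

section aux

variable {d : ℕ} {α β : ℝ}

lemma gaussKernel_pos (hβ : 0 < β) (z x : EuclideanSpace ℝ (Fin d)) :
    0 < gaussKernel d α β z x :=
  mul_pos (Real.rpow_pos_of_pos (by positivity) _) (Real.exp_pos _)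

lemma gaussKernel_le (hβ : 0 < β) (z x : EuclideanSpace ℝ (Fin d)) :
    gaussKernel d α β z x ≤ (2 * Real.pi * β ^ 2) ^ (-(d : ℝ) / 2) := by
  have h1 : Real.exp (-‖z - α • x‖ ^ 2 / (2 * β ^ 2)) ≤ 1 := by
    apply Real.exp_le_one_iff.2
    rw [neg_div]
    exact neg_nonpos_of_nonneg (by positivity)
  calc gaussKernel d α β z x
      ≤ (2 * Real.pi * β ^ 2) ^ (-(d : ℝ) / 2) * 1 := by
        exact mul_le_mul_of_nonneg_left h1 (le_of_lt (Real.rpow_pos_of_pos (by positivity) _))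
    _ = _ := mul_one _

lemma continuous_gaussKernel (z : EuclideanSpace ℝ (Fin d)) :
    Continuous (fun x => gaussKernel d α β z x) := by
  unfold gaussKernel
  fun_prop

/-- Gradient in `z` of the Gaussian kernel. -/
lemma hasGradientAt_gaussKernel (hβ : 0 < β) (x z : EuclideanSpace ℝ (Fin d)) :
    HasGradientAt (fun z' => gaussKernel d α β z' x)
      (gaussKernel d α β z x • ((-(1 / β ^ 2)) • (z - α • x))) z := by
  set c := α • x with hc
  set C : ℝ := (2 * Real.pi * β ^ 2) ^ (-(d : ℝ) / 2) with hC
  have h1 : HasFDerivAt (fun z' : EuclideanSpace ℝ (Fin d) => ‖z' - c‖ ^ 2)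
      (2 • ((innerSL ℝ (z - c)).comp (ContinuousLinearMap.id ℝ _))) z := by
    simpa using ((hasFDerivAt_id z).sub_const c).norm_sq
  have h2 : HasFDerivAt (fun z' : EuclideanSpace ℝ (Fin d) => -‖z' - c‖ ^ 2 / (2 * β ^ 2))
      ((-(1 / (2 * β ^ 2))) • (2 • ((innerSL ℝ (z - c)).comp (ContinuousLinearMap.id ℝ _)))) z := by
    have h2' := h1.const_smul (-(1 / (2 * β ^ 2)))
    have funeq : (fun z' : EuclideanSpace ℝ (Fin d) => (-(1 / (2 * β ^ 2))) • ‖z' - c‖ ^ 2)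
        = (fun z' : EuclideanSpace ℝ (Fin d) => -‖z' - c‖ ^ 2 / (2 * β ^ 2)) := by
      funext z'
      rw [smul_eq_mul]
      ring
    rw [← funeq]
    exact h2'
  have h3 := (h2.exp.const_mul C)
  rw [hasGradientAt_iff_hasFDerivAt]
  convert h3 using 1
  · rfl
  case e'_11 => funext u; simp only [gaussKernel, hc, hC]
  ext u
  simp only [toDual_apply_apply, ContinuousLinearMap.smul_apply, ContinuousLinearMap.coe_smul',
    Pi.smul_apply, ContinuousLinearMap.coe_comp', Function.comp_apply,
    ContinuousLinearMap.coe_id', id_eq, innerSL_apply_apply, smul_eq_mul, gaussKernel,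
    real_inner_smul_left]
  ring

end aux

/-- The analytic score representation (Eq. (7)): if `Q₀` is a probability density and
`Q(z) = ∫ φ_{α,β}(z,x) Q₀(x) dx`, then `Q > 0` everywhere and
`∇ log Q(z) = ∫ −((z − αx)/β²) · w(z,x) · Q₀(x) dx` with weights
`w(z,x) = φ_{α,β}(z,x) / ∫ φ_{α,β}(z,x′) Q₀(x′) dx′`. -/
theorem score_of_gaussian_smoothed_density (d : ℕ) (α β : ℝ) (hβ : 0 < β)
    (Q₀ : EuclideanSpace ℝ (Fin d) → ℝ)
    (hmeas : Measurable Q₀) (hnn : ∀ x, 0 ≤ Q₀ x)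
    (hprob : ∫ x, Q₀ x = 1) :
    ∀ z : EuclideanSpace ℝ (Fin d),
      (0 < ∫ x, gaussKernel d α β z x * Q₀ x) ∧
      HasGradientAt (fun z' => Real.log (∫ x, gaussKernel d α β z' x * Q₀ x))
        (∫ x, ((gaussKernel d α β z x / ∫ x', gaussKernel d α β z x' * Q₀ x') * Q₀ x) •
          ((-(1 / β ^ 2)) • (z - α • x))) z := by
  intro z
  
  set C : ℝ := (2 * Real.pi * β ^ 2) ^ (-(d : ℝ) / 2) with hC
  have hCpos : 0 < C := Real.rpow_pos_of_pos (by positivity) _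
  -- Q₀ integrable
  have hQ₀int : Integrable Q₀ := by
    by_contra h
    rw [integral_undef h] at hprob
    exact one_ne_zero hprob.symm
  -- integrability of the integrand for any z'
  have hFint : ∀ z' : EuclideanSpace ℝ (Fin d), Integrable (fun x => gaussKernel d α β z' x * Q₀ x) := by
    intro z'
    exact hQ₀int.bdd_mul (continuous_gaussKernel z').aestronglyMeasurable
      (c := C) (Filter.Eventually.of_forall fun x => by
        rw [Real.norm_eq_abs, abs_of_pos (gaussKernel_pos hβ z' x)]
        exact gaussKernel_le hβ z' x)
  -- positivity
  have hpos : ∀ z' : EuclideanSpace ℝ (Fin d), 0 < ∫ x, gaussKernel d α β z' x * Q₀ x := by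
    intro z'
    rw [integral_pos_iff_support_of_nonneg
      (fun x => mul_nonneg (gaussKernel_pos hβ z' x).le (hnn x)) (hFint z')]
    have hs : (Function.support fun x => gaussKernel d α β z' x * Q₀ x) =
        Function.support Q₀ := by
      ext x
      simp [Function.mem_support, mul_eq_zero, (gaussKernel_pos hβ z' x).ne']
    rw [hs]
    have := (integral_pos_iff_support_of_nonneg hnn hQ₀int).1 (by rw [hprob]; norm_num)
    exact this
  refine ⟨hpos z, ?_⟩
  -- the derivative of the unnormalized density
  set g : EuclideanSpace ℝ (Fin d) → EuclideanSpace ℝ (Fin d) := fun x =>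
    (Q₀ x * gaussKernel d α β z x) • ((-(1 / β ^ 2)) • (z - α • x)) with hg
  have hDQ : HasFDerivAt (fun z' => ∫ x, gaussKernel d α β z' x * Q₀ x)
      ((toDual ℝ (EuclideanSpace ℝ (Fin d))) (∫ x, g x)) z := by
    have key := hasFDerivAt_integral_of_dominated_of_fderiv_le
      (𝕜 := ℝ) (μ := (volume : Measure (EuclideanSpace ℝ (Fin d))))
      (F := fun z' x => gaussKernel d α β z' x * Q₀ x)
      (F' := fun z' x => (toDual ℝ (EuclideanSpace ℝ (Fin d)))
        ((Q₀ x * gaussKernel d α β z' x) • ((-(1 / β ^ 2)) • (z' - α • x))))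
      (x₀ := z) (bound := fun x => (C / β) * Q₀ x)
      (Metric.ball_mem_nhds z one_pos)
      (Filter.Eventually.of_forall fun z' =>
        ((continuous_gaussKernel z').measurable.mul hmeas).aestronglyMeasurable)
      (hFint z)
      ?meas' ?bound ((hQ₀int.const_mul _)) ?diff
    · have : (∫ x, (toDual ℝ (EuclideanSpace ℝ (Fin d)))
          ((Q₀ x * gaussKernel d α β z x) • ((-(1 / β ^ 2)) • (z - α • x)))) =
          (toDual ℝ (EuclideanSpace ℝ (Fin d))) (∫ x, g x) := by
        exact (toDual ℝ (EuclideanSpace ℝ (Fin d))).toLinearIsometry.integral_comp_comm g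
      rw [this] at key
      exact key
    case meas' =>
      apply Continuous.comp_aestronglyMeasurable (toDual ℝ (EuclideanSpace ℝ (Fin d))).continuous
      refine AEStronglyMeasurable.smul (f := fun x => Q₀ x * gaussKernel d α β z x)
        (g := fun x => (-(1 / β ^ 2)) • (z - α • x)) ?_ ?_
      · exact (hmeas.mul (continuous_gaussKernel z).measurable).aestronglyMeasurable
      · exact (Continuous.aestronglyMeasurable (by fun_prop))
    case bound =>
      apply Filter.Eventually.of_forall
      intro x z' _
      rw [LinearIsometryEquiv.norm_map, norm_smul, norm_smul]
      have hub : ‖z' - α • x‖ * Real.exp (-‖z' - α • x‖ ^ 2 / (2 * β ^ 2)) ≤ β := by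
        set u := ‖z' - α • x‖ with hu
        have hu0 : 0 ≤ u := norm_nonneg _
        rw [neg_div, Real.exp_neg, ← div_eq_mul_inv, div_le_iff₀ (Real.exp_pos _)]
        have hid : u ^ 2 / (2 * β ^ 2) * (2 * β ^ 2) = u ^ 2 := by field_simp
        have hmul := mul_le_mul_of_nonneg_right
          (Real.add_one_le_exp (u ^ 2 / (2 * β ^ 2)))
          (le_of_lt (by positivity : (0:ℝ) < 2 * β ^ 2))
        rw [add_mul, hid, one_mul] at hmul
        nlinarith [sq_nonneg (u - β), mul_pos hβ hβ, hβ]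
      have hnorm : ‖Q₀ x * gaussKernel d α β z' x‖ = Q₀ x * gaussKernel d α β z' x := by
        rw [Real.norm_eq_abs, abs_of_nonneg (mul_nonneg (hnn x) (gaussKernel_pos hβ z' x).le)]
      rw [hnorm]
      have : ‖-(1 / β ^ 2)‖ = 1 / β ^ 2 := by
        rw [norm_neg, Real.norm_eq_abs, abs_of_pos (by positivity)]
      rw [this]
      unfold gaussKernel
      calc Q₀ x * ((2 * Real.pi * β ^ 2) ^ (-(d:ℝ) / 2) *
              Real.exp (-‖z' - α • x‖ ^ 2 / (2 * β ^ 2))) * (1 / β ^ 2 * ‖z' - α • x‖)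
          = (C / β ^ 2) * Q₀ x *
              (‖z' - α • x‖ * Real.exp (-‖z' - α • x‖ ^ 2 / (2 * β ^ 2))) := by
            rw [hC]; ring
        _ ≤ (C / β ^ 2) * Q₀ x * β := by
            apply mul_le_mul_of_nonneg_left hub (mul_nonneg (by positivity) (hnn x))
        _ = C / β * Q₀ x := by field_simp
    case diff =>
      apply Filter.Eventually.of_forall
      intro x z' _
      have h := ((hasGradientAt_gaussKernel (α := α) hβ x z').hasFDerivAt).mul_const (Q₀ x)
      have hvec : ((Q₀ x * gaussKernel d α β z' x) • ((-(1 / β ^ 2)) • (z' - α • x)))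
          = Q₀ x • (gaussKernel d α β z' x • ((-(1 / β ^ 2)) • (z' - α • x))) :=
        (smul_smul _ _ _).symm
      show HasFDerivAt (fun z'' => gaussKernel d α β z'' x * Q₀ x)
        ((toDual ℝ (EuclideanSpace ℝ (Fin d)))
          ((Q₀ x * gaussKernel d α β z' x) • ((-(1 / β ^ 2)) • (z' - α • x)))) z'
      rw [hvec, _root_.map_smul]
      exact h
  -- now take log
  have hlog := hDQ.log (hpos z).ne'
  rw [← _root_.map_smul] at hlog
  have hfin := hlog.hasGradientAt
  rw [LinearIsometryEquiv.symm_apply_apply] at hfin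
  have heq : (∫ x, ((gaussKernel d α β z x / ∫ x', gaussKernel d α β z x' * Q₀ x') * Q₀ x) •
      ((-(1 / β ^ 2)) • (z - α • x))) =
      (∫ x, gaussKernel d α β z x * Q₀ x)⁻¹ • ∫ x, g x := by
    rw [← integral_smul]
    congr 1
    funext x
    simp only [hg, smul_smul]
    congr 1
    ring
  rw [heq]
  exact hfin
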